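/- Let d ≥ 3. There exists a constant C > 0 depending only on d such that for every integer k ≥ 1, every y ∈ ℝ^d∖{0}, and every z ∈ ℝ^d with |z - y| ≤ |y|/C, one has |g(z) - Σ_{|α| ≤ k} a_α·(z-y)^α| ≤ (C·k^d/|y|^{d-1})·(2d·|z-y|/|y|)^{k+1}, where the sum is over multi-indices α with |α| ≤ k and a_α = ∂^α g(y)/α! are the Taylor coefficients of g at y. -/

import Mathlib

open MeasureTheory

/-- The gravitational kernel `g(z) = z/|z|^d` (with the junk value `0` at `z = 0`). -/
noncomputable def gravKernel (d : ℕ) (z : EuclideanSpace ℝ (Fin d)) :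
    EuclideanSpace ℝ (Fin d) :=
  (‖z‖ ^ d)⁻¹ • z

/-- The partial derivative of a vector-valued map in the `i`-th coordinate direction. -/
noncomputable def coordPDeriv (d : ℕ) (i : Fin d)
    (f : EuclideanSpace ℝ (Fin d) → EuclideanSpace ℝ (Fin d)) :
    EuclideanSpace ℝ (Fin d) → EuclideanSpace ℝ (Fin d) :=
  fun x => fderiv ℝ f x (EuclideanSpace.single i 1)

/-- The iterated partial derivative `∂^α f` associated to a multi-index `α`. -/
noncomputable def multiPDeriv (d : ℕ) (α : Fin d → ℕ)
    (f : EuclideanSpace ℝ (Fin d) → EuclideanSpace ℝ (Fin d)) :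
    EuclideanSpace ℝ (Fin d) → EuclideanSpace ℝ (Fin d) :=
  (List.finRange d).foldr (fun i g => (coordPDeriv d i)^[α i] g) f

/-- The Taylor coefficient `a_α = ∂^α g(y)/α!` of `g` at `y`. -/
noncomputable def taylorCoeff (d : ℕ) (α : Fin d → ℕ) (y : EuclideanSpace ℝ (Fin d)) :
    EuclideanSpace ℝ (Fin d) :=
  ((∏ i, Nat.factorial (α i) : ℕ) : ℝ)⁻¹ • multiPDeriv d α (gravKernel d) y

namespace GravAux

open Finset Metric

variable {d : ℕ}

/-- smooth away from the origin -/
def SmO (d : ℕ) (f : EuclideanSpace ℝ (Fin d) → EuclideanSpace ℝ (Fin d)) : Prop :=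
  ∀ x : EuclideanSpace ℝ (Fin d), x ≠ 0 → ContDiffAt ℝ (⊤ : ℕ∞) f x

lemma smO_gravKernel : SmO d (gravKernel d) := by
  intro x hx
  have h1 : ContDiffAt ℝ (⊤ : ℕ∞) (fun y : EuclideanSpace ℝ (Fin d) => ‖y‖) x :=
    ContDiffAt.norm ℝ contDiffAt_id hx
  have h2 : ContDiffAt ℝ (⊤ : ℕ∞) (fun y : EuclideanSpace ℝ (Fin d) => (‖y‖ ^ d)⁻¹) x := by
    apply ContDiffAt.inv (h1.pow d)
    exact pow_ne_zero _ (norm_ne_zero_iff.mpr hx)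
  exact h2.smul contDiffAt_id

lemma SmO.coord (i : Fin d) {f} (hf : SmO d f) : SmO d (coordPDeriv d i f) := by
  intro x hx
  have h1 : ContDiffAt ℝ (⊤ : ℕ∞) (fderiv ℝ f) x :=
    (hf x hx).fderiv_right (by norm_cast)
  exact h1.clm_apply contDiffAt_const

lemma SmO.differentiableAt {f} (hf : SmO d f) {x : EuclideanSpace ℝ (Fin d)} (hx : x ≠ 0) :
    DifferentiableAt ℝ f x :=
  (hf x hx).differentiableAt (by norm_cast)

/-- iterated partial derivatives indexed by a list -/
noncomputable def pdL (d : ℕ) (L : List (Fin d))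
    (f : EuclideanSpace ℝ (Fin d) → EuclideanSpace ℝ (Fin d)) :
    EuclideanSpace ℝ (Fin d) → EuclideanSpace ℝ (Fin d) :=
  L.foldr (fun i g => coordPDeriv d i g) f

@[simp] lemma pdL_nil (f) : pdL d [] f = f := rfl

@[simp] lemma pdL_cons (i : Fin d) (L f) :
    pdL d (i :: L) f = coordPDeriv d i (pdL d L f) := rfl

lemma pdL_append (L₁ L₂ : List (Fin d)) (f) :
    pdL d (L₁ ++ L₂) f = pdL d L₁ (pdL d L₂ f) := by
  simp [pdL, List.foldr_append]

lemma SmO.pdL {f} (hf : SmO d f) (L : List (Fin d)) : SmO d (pdL d L f) := by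
  induction L with
  | nil => exact hf
  | cons i L ih => exact ih.coord i

lemma pdL_replicate (n : ℕ) (i : Fin d) (f) :
    pdL d (List.replicate n i) f = (coordPDeriv d i)^[n] f := by
  induction n with
  | zero => rfl
  | succ n ih => rw [List.replicate_succ, pdL_cons, ih, Function.iterate_succ_apply']

/-- the list of indices attached to a multi-index -/
def mlist (d : ℕ) (α : Fin d → ℕ) : List (Fin d) :=
  (List.finRange d).flatMap fun i => List.replicate (α i) i

lemma multiPDeriv_eq_pdL (α : Fin d → ℕ) (f) :
    multiPDeriv d α f = pdL d (mlist d α) f := by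
  show (List.finRange d).foldr (fun i g => (coordPDeriv d i)^[α i] g) f = _
  unfold mlist
  induction List.finRange d with
  | nil => rfl
  | cons i L ih =>
      rw [List.foldr_cons, ih, List.flatMap_cons, pdL_append, pdL_replicate]

lemma multiPDeriv_zero (f) : multiPDeriv d (fun _ => 0) f = f := by
  show (List.finRange d).foldr (fun i g => (coordPDeriv d i)^[0] g) f = f
  induction List.finRange d with
  | nil => rfl
  | cons i L ih => rw [List.foldr_cons, ih]; rfl


lemma coordPDeriv_comm {f} (hf : SmO d f) {x : EuclideanSpace ℝ (Fin d)} (hx : x ≠ 0)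
    (i j : Fin d) :
    coordPDeriv d i (coordPDeriv d j f) x = coordPDeriv d j (coordPDeriv d i f) x := by
  have hev : ∀ᶠ y in nhds x, ContDiffAt ℝ 1 f y :=
    ((hf x hx).of_le (by norm_cast) : ContDiffAt ℝ 1 f x).eventually (by simp)
  have hasf : ∀ᶠ y in nhds x, HasFDerivAt f (fderiv ℝ f y) y :=
    hev.mono fun y hy => (hy.differentiableAt one_ne_zero).hasFDerivAt
  have hf1 : ContDiffAt ℝ 1 (fderiv ℝ f) x :=
    ((hf x hx).of_le (by norm_cast) : ContDiffAt ℝ 2 f x).fderiv_right (by norm_num)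
  have hdf' : DifferentiableAt ℝ (fderiv ℝ f) x := hf1.differentiableAt one_ne_zero
  have hf'' : HasFDerivAt (fderiv ℝ f) (fderiv ℝ (fderiv ℝ f) x) x := hdf'.hasFDerivAt
  have hsym := second_derivative_symmetric_of_eventually hasf hf''
  have key : ∀ v w : EuclideanSpace ℝ (Fin d),
      fderiv ℝ (fun y => fderiv ℝ f y w) x v = fderiv ℝ (fderiv ℝ f) x v w := by
    intro v w
    have := fderiv_clm_apply (𝕜 := ℝ) (c := fderiv ℝ f)
      (u := fun _ => w) (x := x) hdf' (differentiableAt_const w)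
    rw [this]
    simp
  show fderiv ℝ (fun y => fderiv ℝ f y (EuclideanSpace.single j 1)) x (EuclideanSpace.single i 1)
      = fderiv ℝ (fun y => fderiv ℝ f y (EuclideanSpace.single i 1)) x (EuclideanSpace.single j 1)
  rw [key, key, hsym]

lemma eqOn_coordPDeriv (i : Fin d) {u v : EuclideanSpace ℝ (Fin d) → EuclideanSpace ℝ (Fin d)}
    (huv : ∀ x : EuclideanSpace ℝ (Fin d), x ≠ 0 → u x = v x)
    {x : EuclideanSpace ℝ (Fin d)} (hx : x ≠ 0) :
    coordPDeriv d i u x = coordPDeriv d i v x := by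
  have hopen : IsOpen {y : EuclideanSpace ℝ (Fin d) | y ≠ 0} := isOpen_ne
  have hev : u =ᶠ[nhds x] v :=
    Filter.eventuallyEq_of_mem (hopen.mem_nhds hx) fun y hy => huv y hy
  show fderiv ℝ u x _ = fderiv ℝ v x _
  rw [hev.fderiv_eq]

lemma pdL_perm {f} (hf : SmO d f) {L L' : List (Fin d)} (hp : L.Perm L')
    {x : EuclideanSpace ℝ (Fin d)} (hx : x ≠ 0) :
    pdL d L f x = pdL d L' f x := by
  induction hp generalizing x with
  | nil => rfl
  | cons a p ih =>
      rw [pdL_cons, pdL_cons]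
      exact eqOn_coordPDeriv a (fun y hy => ih hy) hx
  | swap a b l =>
      rw [pdL_cons, pdL_cons, pdL_cons, pdL_cons]
      exact coordPDeriv_comm (hf.pdL l) hx b a
  | trans p q ih1 ih2 => exact (ih1 hx).trans (ih2 hx)

lemma mlist_update_perm (α : Fin d → ℕ) (i : Fin d) :
    (mlist d (Function.update α i (α i + 1))).Perm (i :: mlist d α) := by
  obtain ⟨l₁, l₂, hsplit⟩ := List.append_of_mem (List.mem_finRange i)
  have hnd : (l₁ ++ i :: l₂).Nodup := hsplit ▸ List.nodup_finRange d
  rw [List.nodup_append] at hnd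
  have hi1 : i ∉ l₁ := fun h => hnd.2.2 i h i List.mem_cons_self rfl
  have hi2 : i ∉ l₂ := (List.nodup_cons.mp hnd.2.1).1
  have hflat : ∀ β : Fin d → ℕ, mlist d β =
      (l₁.flatMap fun j => List.replicate (β j) j) ++
        (List.replicate (β i) i ++ (l₂.flatMap fun j => List.replicate (β j) j)) := by
    intro β
    rw [mlist, hsplit, List.flatMap_append, List.flatMap_cons]
  have hcongr : ∀ l : List (Fin d), i ∉ l →
      (l.flatMap fun j => List.replicate (Function.update α i (α i + 1) j) j)
        = l.flatMap fun j => List.replicate (α j) j := by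
    intro l hl
    induction l with
    | nil => rfl
    | cons a l ih =>
        rw [List.flatMap_cons, List.flatMap_cons,
          ih (fun h => hl (List.mem_cons_of_mem a h)),
          Function.update_of_ne (fun h : a = i => hl (h ▸ List.mem_cons_self))]
  rw [hflat (Function.update α i (α i + 1)), hflat α,
    hcongr l₁ hi1, hcongr l₂ hi2, Function.update_self, List.replicate_succ]
  exact List.perm_middle

/-- the key commutation: one more coordinate derivative on a multi-index derivative -/
lemma coordPDeriv_multiPDeriv {f} (hf : SmO d f) (α : Fin d → ℕ) (i : Fin d)
    {x : EuclideanSpace ℝ (Fin d)} (hx : x ≠ 0) :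
    coordPDeriv d i (multiPDeriv d α f) x
      = multiPDeriv d (Function.update α i (α i + 1)) f x := by
  have h1 : ∀ y : EuclideanSpace ℝ (Fin d), y ≠ 0 →
      multiPDeriv d α f y = pdL d (mlist d α) f y := by
    intro y _; rw [multiPDeriv_eq_pdL]
  calc coordPDeriv d i (multiPDeriv d α f) x
      = coordPDeriv d i (pdL d (mlist d α) f) x := eqOn_coordPDeriv i h1 hx
    _ = pdL d (i :: mlist d α) f x := rfl
    _ = pdL d (mlist d (Function.update α i (α i + 1))) f x :=
        (pdL_perm hf (mlist_update_perm α i) hx).symm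
    _ = multiPDeriv d (Function.update α i (α i + 1)) f x := by rw [multiPDeriv_eq_pdL]

lemma SmO.multiPDeriv {f} (hf : SmO d f) (α : Fin d → ℕ) : SmO d (multiPDeriv d α f) := by
  rw [multiPDeriv_eq_pdL]; exact hf.pdL _


lemma euclidean_sum_single (h : EuclideanSpace ℝ (Fin d)) :
    ∑ i, h i • EuclideanSpace.single i (1:ℝ) = h := by
  ext j
  rw [WithLp.ofLp_sum, Finset.sum_apply]
  simp [EuclideanSpace.single_apply]

lemma fderiv_dir_eq_sum {f} (hf : SmO d f) {x : EuclideanSpace ℝ (Fin d)} (hx : x ≠ 0)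
    (h : EuclideanSpace ℝ (Fin d)) :
    fderiv ℝ f x h = ∑ i, h i • coordPDeriv d i f x := by
  conv_lhs => rw [← euclidean_sum_single h]
  rw [map_sum]
  exact Finset.sum_congr rfl fun i _ => by rw [(fderiv ℝ f x).map_smul]; rfl

/-- index set for homogeneous multi-indices of total degree `m` -/
def mIdx (d m : ℕ) : Finset (Fin d → ℕ) :=
  (Fintype.piFinset fun _ : Fin d => Finset.range (m+1)).filter fun α => ∑ i, α i = m

lemma mem_mIdx {m : ℕ} {α : Fin d → ℕ} :
    α ∈ mIdx d m ↔ (∀ i, α i ≤ m) ∧ ∑ i, α i = m := by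
  simp [mIdx, Fintype.mem_piFinset, Nat.lt_succ_iff]

noncomputable def Tcoef (h : EuclideanSpace ℝ (Fin d)) (α : Fin d → ℕ) : ℝ :=
  (∏ i, h i ^ α i) * ((∏ i, Nat.factorial (α i) : ℕ) : ℝ)⁻¹

noncomputable def Tm (d : ℕ) (h : EuclideanSpace ℝ (Fin d)) (m : ℕ)
    (x : EuclideanSpace ℝ (Fin d)) : EuclideanSpace ℝ (Fin d) :=
  ∑ α ∈ mIdx d m, Tcoef h α • multiPDeriv d α (gravKernel d) x

lemma prod_pow_update (h : EuclideanSpace ℝ (Fin d)) (α : Fin d → ℕ) (i : Fin d) (b : ℕ) :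
    (∏ j, h j ^ (Function.update α i b) j) = h i ^ b * ∏ j ∈ Finset.univ \ {i}, h j ^ α j := by
  have e : ∀ j, h j ^ (Function.update α i b) j
      = Function.update (fun j => h j ^ α j) i (h i ^ b) j := by
    intro j
    by_cases hj : j = i
    · subst hj; simp
    · simp [Function.update_of_ne hj]
  rw [Finset.prod_congr rfl fun j _ => e j, Finset.prod_update_of_mem (Finset.mem_univ i)]

lemma prod_fact_update (α : Fin d → ℕ) (i : Fin d) (b : ℕ) :
    (∏ j, Nat.factorial ((Function.update α i b) j))
      = Nat.factorial b * ∏ j ∈ Finset.univ \ {i}, Nat.factorial (α j) := by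
  have e : ∀ j, Nat.factorial ((Function.update α i b) j)
      = Function.update (fun j => Nat.factorial (α j)) i (Nat.factorial b) j := by
    intro j
    by_cases hj : j = i
    · subst hj; simp
    · simp [Function.update_of_ne hj]
  rw [Finset.prod_congr rfl fun j _ => e j, Finset.prod_update_of_mem (Finset.mem_univ i)]

lemma Tcoef_update (h : EuclideanSpace ℝ (Fin d)) (α : Fin d → ℕ) (i : Fin d) :
    Tcoef h α * h i = ((α i : ℝ) + 1) * Tcoef h (Function.update α i (α i + 1)) := by
  unfold Tcoef
  rw [prod_pow_update h α i (α i + 1), prod_fact_update α i (α i + 1)]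
  have e1 : (∏ j, h j ^ α j) = h i ^ α i * ∏ j ∈ Finset.univ \ {i}, h j ^ α j :=
    Finset.prod_eq_mul_prod_sdiff_singleton_of_mem (Finset.mem_univ i) _
  have e2 : (∏ j, Nat.factorial (α j)) = Nat.factorial (α i)
      * ∏ j ∈ Finset.univ \ {i}, Nat.factorial (α j) :=
    Finset.prod_eq_mul_prod_sdiff_singleton_of_mem (Finset.mem_univ i) _
  rw [e1, e2]
  have hf1 : (Nat.factorial (α i) : ℝ) ≠ 0 := Nat.cast_ne_zero.mpr (Nat.factorial_ne_zero _)
  have hf2 : ((∏ j ∈ Finset.univ \ {i}, Nat.factorial (α j) : ℕ) : ℝ) ≠ 0 :=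
    Nat.cast_ne_zero.mpr (Finset.prod_ne_zero_iff.mpr fun j _ => Nat.factorial_ne_zero _)
  have hfs : (Nat.factorial (α i + 1) : ℝ) = ((α i : ℝ) + 1) * Nat.factorial (α i) := by
    rw [Nat.factorial_succ]; push_cast; ring
  have hαi : ((α i : ℝ) + 1) ≠ 0 := by positivity
  push_cast
  rw [hfs]
  rw [pow_succ]
  field_simp

lemma reindex_sum (h : EuclideanSpace ℝ (Fin d)) (v : (Fin d → ℕ) → EuclideanSpace ℝ (Fin d))
    (m : ℕ) :
    ∑ α ∈ mIdx d m, ∑ i, (Tcoef h α * h i) • v (Function.update α i (α i + 1))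
      = ∑ β ∈ mIdx d (m+1), (((m:ℝ)+1) * Tcoef h β) • v β := by
  have rhs_expand : ∀ β ∈ mIdx d (m+1),
      (((m:ℝ)+1) * Tcoef h β) • v β
        = ∑ i ∈ Finset.univ.filter (fun i => β i ≠ 0), ((β i : ℝ) * Tcoef h β) • v β := by
    intro β hβ
    rw [← Finset.sum_smul, ← Finset.sum_mul]
    have hsc : ∑ i ∈ Finset.univ.filter (fun i => β i ≠ 0), (β i : ℝ) = ((m:ℝ)+1) := by
      have hn : ∑ i ∈ Finset.univ.filter (fun i => β i ≠ 0), β i = m + 1 := by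
        rw [Finset.sum_filter_ne_zero]
        exact (mem_mIdx.mp hβ).2
      have := congrArg (fun n : ℕ => (n : ℝ)) hn
      push_cast at this
      simpa using this
    rw [hsc]
  rw [Finset.sum_congr rfl rhs_expand, Finset.sum_sigma', Finset.sum_sigma']
  refine Finset.sum_nbij'
    (fun p : Σ _ : Fin d → ℕ, Fin d =>
      (⟨Function.update p.1 p.2 (p.1 p.2 + 1), p.2⟩ : Σ _ : Fin d → ℕ, Fin d))
    (fun q : Σ _ : Fin d → ℕ, Fin d =>
      (⟨Function.update q.1 q.2 (q.1 q.2 - 1), q.2⟩ : Σ _ : Fin d → ℕ, Fin d))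
    ?_ ?_ ?_ ?_ ?_
  · rintro ⟨α, i⟩ hp
    dsimp only at hp ⊢
    rw [Finset.mem_sigma] at hp ⊢
    dsimp only at hp ⊢
    obtain ⟨hα, -⟩ := hp
    obtain ⟨hb, hs⟩ := mem_mIdx.mp hα
    have hrest : α i + ∑ j ∈ Finset.univ \ {i}, α j = m := by
      rw [← Finset.erase_eq]
      rw [Finset.add_sum_erase Finset.univ α (Finset.mem_univ i)]
      exact hs
    refine ⟨mem_mIdx.mpr ⟨?_, ?_⟩, by simp⟩
    · intro j
      by_cases hj : j = i
      · subst hj; simp; exact hb j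
      · rw [Function.update_of_ne hj]; exact (hb j).trans (Nat.le_succ m)
    · rw [Finset.sum_update_of_mem (Finset.mem_univ i)]
      omega
  · rintro ⟨β, i⟩ hq
    dsimp only at hq ⊢
    rw [Finset.mem_sigma] at hq ⊢
    dsimp only at hq ⊢
    obtain ⟨hβ, hi⟩ := hq
    rw [Finset.mem_filter] at hi
    have hβi : β i ≠ 0 := hi.2
    obtain ⟨hb, hs⟩ := mem_mIdx.mp hβ
    have hrest : β i + ∑ j ∈ Finset.univ \ {i}, β j = m + 1 := by
      rw [← Finset.erase_eq]
      rw [Finset.add_sum_erase Finset.univ β (Finset.mem_univ i)]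
      exact hs
    refine ⟨mem_mIdx.mpr ⟨?_, ?_⟩, Finset.mem_univ i⟩
    · intro j
      by_cases hj : j = i
      · subst hj; simp; omega
      · rw [Function.update_of_ne hj]
        have h2 : β i + β j ≤ m + 1 := by
          rw [← hs]
          have hsub : ({i, j} : Finset (Fin d)) ⊆ Finset.univ := Finset.subset_univ _
          have h3 := Finset.sum_le_sum_of_subset hsub (f := β)
          rwa [Finset.sum_pair (fun hij : i = j => hj hij.symm)] at h3
        omega
    · rw [Finset.sum_update_of_mem (Finset.mem_univ i)]
      omega
  · rintro ⟨α, i⟩ hp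
    have key : Function.update (Function.update α i (α i + 1)) i
        (Function.update α i (α i + 1) i - 1) = α := by
      rw [Function.update_self, Nat.add_sub_cancel, Function.update_idem,
        Function.update_eq_self]
    exact congrArg (fun f => (⟨f, i⟩ : Σ _ : Fin d → ℕ, Fin d)) key
  · rintro ⟨β, i⟩ hq
    rw [Finset.mem_sigma, Finset.mem_filter] at hq
    have hβi : β i ≠ 0 := hq.2.2
    have key : Function.update (Function.update β i (β i - 1)) i
        (Function.update β i (β i - 1) i + 1) = β := by
      rw [Function.update_self, Function.update_idem]
      have hb1 : β i - 1 + 1 = β i := Nat.succ_pred_eq_of_pos (Nat.pos_of_ne_zero hβi)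
      rw [hb1, Function.update_eq_self]
    exact congrArg (fun f => (⟨f, i⟩ : Σ _ : Fin d → ℕ, Fin d)) key
  · rintro ⟨α, i⟩ hp
    dsimp only
    show (Tcoef h α * h i) • v (Function.update α i (α i + 1)) = _
    have hc := Tcoef_update h α i
    simp only [Function.update_self]
    rw [hc]
    push_cast
    ring_nf

lemma hasDerivAt_line (y h : EuclideanSpace ℝ (Fin d)) (t : ℝ) :
    HasDerivAt (fun s : ℝ => y + s • h) h t := by
  simpa using ((hasDerivAt_id t).smul_const h).const_add y

lemma Tm_hasDerivAt (y h : EuclideanSpace ℝ (Fin d)) (m : ℕ) (t : ℝ)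
    (hx : y + t • h ≠ 0) :
    HasDerivAt (fun s : ℝ => Tm d h m (y + s • h))
      (((m:ℝ)+1) • Tm d h (m+1) (y + t • h)) t := by
  set x₀ := y + t • h with hx₀
  have hline := hasDerivAt_line y h t
  have hterm : ∀ α ∈ mIdx d m, HasDerivAt
      (fun s : ℝ => Tcoef h α • multiPDeriv d α (gravKernel d) (y + s • h))
      (Tcoef h α • (fderiv ℝ (multiPDeriv d α (gravKernel d)) x₀ h)) t := by
    intro α _
    have hsm := smO_gravKernel.multiPDeriv (d := d) α
    have hF : HasFDerivAt (multiPDeriv d α (gravKernel d))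
        (fderiv ℝ (multiPDeriv d α (gravKernel d)) x₀) x₀ :=
      (hsm.differentiableAt hx).hasFDerivAt
    exact (hF.comp_hasDerivAt t hline).const_smul (Tcoef h α)
  have hsum : HasDerivAt (fun s : ℝ => Tm d h m (y + s • h))
      (∑ α ∈ mIdx d m, Tcoef h α • (fderiv ℝ (multiPDeriv d α (gravKernel d)) x₀ h)) t := by
    unfold Tm
    exact HasDerivAt.fun_sum hterm
  convert hsum using 1
  have e1 : ∀ α ∈ mIdx d m, Tcoef h α • (fderiv ℝ (multiPDeriv d α (gravKernel d)) x₀ h)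
      = ∑ i, (Tcoef h α * h i) •
          multiPDeriv d (Function.update α i (α i + 1)) (gravKernel d) x₀ := by
    intro α _
    rw [fderiv_dir_eq_sum (smO_gravKernel.multiPDeriv α) hx h, Finset.smul_sum]
    refine Finset.sum_congr rfl fun i _ => ?_
    rw [coordPDeriv_multiPDeriv smO_gravKernel α i hx, smul_smul]
  rw [Finset.sum_congr rfl e1, reindex_sum h
    (fun β => multiPDeriv d β (gravKernel d) x₀) m]
  unfold Tm
  rw [Finset.smul_sum]
  exact Finset.sum_congr rfl fun β _ => by rw [mul_smul]

lemma Tm_zero (h x : EuclideanSpace ℝ (Fin d)) : Tm d h 0 x = gravKernel d x := by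
  have hset : mIdx d 0 = {fun _ => 0} := by
    ext α
    rw [mem_mIdx, Finset.mem_singleton]
    constructor
    · rintro ⟨hb, -⟩
      funext i
      exact Nat.le_zero.mp (hb i)
    · rintro rfl
      exact ⟨fun _ => le_rfl, by simp⟩
  rw [Tm, hset, Finset.sum_singleton, multiPDeriv_zero]
  unfold Tcoef
  simp

lemma iteratedDeriv_phi (y h : EuclideanSpace ℝ (Fin d)) (r' : ℝ)
    (hne : ∀ s : ℝ, |s| < r' → y + s • h ≠ 0) (m : ℕ) :
    ∀ t : ℝ, |t| < r' →
      iteratedDeriv m (fun s : ℝ => gravKernel d (y + s • h)) t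
        = ((Nat.factorial m : ℝ)) • Tm d h m (y + t • h) := by
  induction m with
  | zero =>
      intro t ht
      rw [iteratedDeriv_zero, Tm_zero]
      simp
  | succ m ih =>
      intro t ht
      have hopen : IsOpen {s : ℝ | |s| < r'} := by
        have : {s : ℝ | |s| < r'} = Metric.ball (0:ℝ) r' := by
          ext s; simp [Real.dist_eq]
        rw [this]; exact Metric.isOpen_ball
      have hev : iteratedDeriv m (fun s : ℝ => gravKernel d (y + s • h))
          =ᶠ[nhds t] fun s => ((Nat.factorial m : ℝ)) • Tm d h m (y + s • h) :=
        Filter.eventuallyEq_of_mem (hopen.mem_nhds ht) fun s hs => ih s hs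
      rw [iteratedDeriv_succ, hev.deriv_eq]
      have hDer : HasDerivAt (fun s : ℝ => ((Nat.factorial m : ℝ)) • Tm d h m (y + s • h))
          (((Nat.factorial m : ℝ)) • (((m:ℝ)+1) • Tm d h (m+1) (y + t • h))) t :=
        (Tm_hasDerivAt y h m t (hne t ht)).const_smul ((Nat.factorial m : ℝ))
      rw [hDer.deriv, smul_smul]
      congr 1
      rw [Nat.factorial_succ]
      push_cast
      ring

lemma statement_sum_eq (k : ℕ) (y z : EuclideanSpace ℝ (Fin d)) :
    (∑ α ∈ Finset.univ.filter (fun α : Fin d → Fin (k + 1) => ∑ i, (α i : ℕ) ≤ k),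
        (∏ i, (z i - y i) ^ (α i : ℕ)) • taylorCoeff d (fun i => (α i : ℕ)) y)
      = ∑ m ∈ Finset.range (k+1), Tm d (z - y) m y := by
  unfold Tm
  rw [Finset.sum_sigma']
  refine (Finset.sum_nbij'
    (fun p : Σ _ : ℕ, (Fin d → ℕ) =>
      (fun i => (⟨min (p.2 i) k, by omega⟩ : Fin (k+1))))
    (fun α : Fin d → Fin (k+1) =>
      (⟨∑ i, (α i : ℕ), fun i => (α i : ℕ)⟩ : Σ _ : ℕ, (Fin d → ℕ)))
    ?_ ?_ ?_ ?_ ?_).symm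
  · rintro ⟨m, α⟩ hp
    dsimp only at hp ⊢
    rw [Finset.mem_sigma] at hp
    obtain ⟨hm, hα⟩ := hp
    dsimp only at hm hα
    rw [Finset.mem_range] at hm
    obtain ⟨hb, hs⟩ := mem_mIdx.mp hα
    have hbk : ∀ i, α i ≤ k := fun i => (hb i).trans (by omega)
    have hmin : ∀ i, min (α i) k = α i := fun i => min_eq_left (hbk i)
    rw [Finset.mem_filter]
    refine ⟨Finset.mem_univ _, ?_⟩
    calc ∑ i, ((⟨min (α i) k, by omega⟩ : Fin (k+1)) : ℕ) = ∑ i, α i := by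
          refine Finset.sum_congr rfl fun i _ => ?_
          simp [hmin i]
      _ ≤ k := by omega
  · intro α hα
    rw [Finset.mem_filter] at hα
    have hsum : ∑ i, (α i : ℕ) ≤ k := hα.2
    rw [Finset.mem_sigma]
    dsimp only
    constructor
    · rw [Finset.mem_range]; omega
    · rw [mem_mIdx]
      exact ⟨fun i => Finset.single_le_sum (f := fun j => ((α j : ℕ)))
        (fun j _ => Nat.zero_le _) (Finset.mem_univ i), rfl⟩
  · rintro ⟨m, α⟩ hp
    dsimp only at hp ⊢
    rw [Finset.mem_sigma] at hp
    obtain ⟨hm, hα⟩ := hp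
    dsimp only at hm hα
    rw [Finset.mem_range] at hm
    obtain ⟨hb, hs⟩ := mem_mIdx.mp hα
    have hbk : ∀ i, α i ≤ k := fun i => (hb i).trans (by omega)
    have h2 : (fun i => ((⟨min (α i) k, by omega⟩ : Fin (k+1)) : ℕ)) = α := by
      funext i
      simp [min_eq_left (hbk i)]
    refine Sigma.ext ?_ (heq_of_eq ?_)
    · dsimp only
      rw [show (fun i => ((⟨min (α i) k, by omega⟩ : Fin (k+1)) : ℕ)) = α from h2]
      exact hs
    · dsimp only
      exact h2
  · intro α hα
    rw [Finset.mem_filter] at hα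
    have hbk : ∀ i, (α i : ℕ) ≤ k := fun i =>
      (Finset.single_le_sum (f := fun j => (α j : ℕ)) (fun j _ => Nat.zero_le _)
        (Finset.mem_univ i)).trans hα.2
    funext i
    apply Fin.ext
    simp [min_eq_left (hbk i)]
  · rintro ⟨m, α⟩ hp
    dsimp only at hp ⊢
    rw [Finset.mem_sigma] at hp
    obtain ⟨hm, hα⟩ := hp
    dsimp only at hm hα
    rw [Finset.mem_range] at hm
    obtain ⟨hb, hs⟩ := mem_mIdx.mp hα
    have hbk : ∀ i, α i ≤ k := fun i => (hb i).trans (by omega)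
    have h2 : ∀ i, ((⟨min (α i) k, by omega⟩ : Fin (k+1)) : ℕ) = α i := by
      intro i; simp [min_eq_left (hbk i)]
    have h3 : ∀ i, min (α i) k = α i := fun i => min_eq_left (hbk i)
    simp only [Fin.val_mk, h3]
    unfold taylorCoeff Tcoef
    rw [smul_smul]
    congr 2

/-! ### Complexification -/

/-- the canonical `ℝ`-linear isometric embedding of real into complex Euclidean space -/
noncomputable def cplx (d : ℕ) :
    EuclideanSpace ℝ (Fin d) →ₗᵢ[ℝ] EuclideanSpace ℂ (Fin d) where
  toLinearMap :=
    { toFun := fun x => (WithLp.toLp 2 (fun j => (x j : ℂ)) : EuclideanSpace ℂ (Fin d))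
      map_add' := by
        intro x y
        ext j
        simp [PiLp.add_apply]
      map_smul' := by
        intro r x
        ext j
        simp [PiLp.smul_apply, Complex.ofReal_mul, Complex.real_smul] }
  norm_map' := by
    intro x
    rw [EuclideanSpace.norm_eq, EuclideanSpace.norm_eq]
    congr 1
    exact Finset.sum_congr rfl fun j _ => by simp

@[simp] lemma cplx_apply (x : EuclideanSpace ℝ (Fin d)) (j : Fin d) :
    cplx d x j = (x j : ℂ) := rfl

lemma cplx_smul (r : ℝ) (v : EuclideanSpace ℝ (Fin d)) :
    ((r : ℂ)) • cplx d v = cplx d (r • v) := by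
  ext j
  simp [PiLp.smul_apply, Complex.ofReal_mul]

open RealInnerProductSpace in
/-- complexification of `t ↦ ‖y + t h‖²` -/
noncomputable def Qc (y h : EuclideanSpace ℝ (Fin d)) (t : ℂ) : ℂ :=
  ((‖y‖^2 : ℝ) : ℂ) + t * ((2 * ⟪y, h⟫ : ℝ) : ℂ) + t^2 * ((‖h‖^2 : ℝ) : ℂ)

open RealInnerProductSpace in
lemma Qc_real (y h : EuclideanSpace ℝ (Fin d)) (s : ℝ) :
    Qc y h (s : ℂ) = ((‖y + s • h‖^2 : ℝ) : ℂ) := by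
  have hn : ‖y + s • h‖^2 = ‖y‖^2 + 2 * ⟪y, s • h⟫ + ‖s • h‖^2 := norm_add_sq_real y (s • h)
  have h1 : ⟪y, s • h⟫ = s * ⟪y, h⟫ := real_inner_smul_right y h s
  have h2 : ‖s • h‖^2 = s^2 * ‖h‖^2 := by
    rw [norm_smul, mul_pow, Real.norm_eq_abs, sq_abs]
  rw [hn, h1, h2, Qc]
  push_cast
  ring

open RealInnerProductSpace in
lemma Qc_bounds (y h : EuclideanSpace ℝ (Fin d)) (hy : 0 < ‖y‖) (hh : 0 < ‖h‖) (t : ℂ)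
    (habs : ‖t‖ ≤ ‖y‖ / (3 * ‖h‖)) :
    (2/9) * ‖y‖^2 ≤ (Qc y h t).re ∧ ‖Qc y h t‖ ≤ 2 * ‖y‖^2 := by
  set a := ‖y‖
  set δ : ℂ := t * ((2 * ⟪y, h⟫ : ℝ) : ℂ) + t^2 * ((‖h‖^2 : ℝ) : ℂ) with hδ
  have hQ : Qc y h t = ((a^2 : ℝ) : ℂ) + δ := by rw [Qc, hδ]; ring
  have hRh : ‖t‖ * ‖h‖ ≤ a / 3 := by
    calc ‖t‖ * ‖h‖ ≤ (a / (3 * ‖h‖)) * ‖h‖ :=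
          mul_le_mul_of_nonneg_right habs (norm_nonneg h)
      _ = a / 3 := by field_simp
  have hδ_abs : ‖δ‖ ≤ (7/9) * a^2 := by
    have h1 : ‖t * ((2 * ⟪y, h⟫ : ℝ) : ℂ)‖ ≤ (2/3) * a^2 := by
      rw [norm_mul, Complex.norm_real, Real.norm_eq_abs]
      have hi : |2 * ⟪y, h⟫| ≤ 2 * (a * ‖h‖) := by
        rw [abs_mul]
        simp only [abs_two]
        exact mul_le_mul_of_nonneg_left (abs_real_inner_le_norm y h) (by norm_num)
      calc ‖t‖ * |2 * ⟪y, h⟫| ≤ ‖t‖ * (2 * (a * ‖h‖)) :=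
            mul_le_mul_of_nonneg_left hi (norm_nonneg t)
        _ = 2 * a * (‖t‖ * ‖h‖) := by ring
        _ ≤ 2 * a * (a / 3) := by
            apply mul_le_mul_of_nonneg_left hRh
            positivity
        _ = (2/3) * a^2 := by ring
    have h2 : ‖t^2 * ((‖h‖^2 : ℝ) : ℂ)‖ ≤ (1/9) * a^2 := by
      rw [norm_mul, norm_pow, Complex.norm_real, Real.norm_eq_abs, abs_of_nonneg (by positivity : (0:ℝ) ≤ ‖h‖^2)]
      calc ‖t‖ ^ 2 * ‖h‖^2 = (‖t‖ * ‖h‖)^2 := by ring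
        _ ≤ (a/3)^2 := by
            apply pow_le_pow_left₀ (by positivity) hRh
        _ = (1/9) * a^2 := by ring
    calc ‖δ‖ ≤ _ + _ := norm_add_le _ _
      _ ≤ (2/3) * a^2 + (1/9) * a^2 := add_le_add h1 h2
      _ ≤ (7/9) * a^2 := by ring_nf; linarith
  constructor
  · rw [hQ]
    have : ((a^2 : ℝ) : ℂ).re = a^2 := Complex.ofReal_re _
    rw [Complex.add_re, this]
    have hre : -‖δ‖ ≤ δ.re := by
      have h4 := Complex.abs_re_le_norm δ
      have h5 := neg_abs_le δ.re
      linarith [abs_nonneg δ.re]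
    linarith [hre, hδ_abs]
  · rw [hQ]
    calc ‖_‖ ≤ ‖((a^2 : ℝ) : ℂ)‖ + ‖δ‖ := norm_add_le _ _
      _ ≤ a^2 + (7/9) * a^2 := by
          rw [Complex.norm_real, Real.norm_eq_abs, abs_of_nonneg (by positivity : (0:ℝ) ≤ a^2)]
          linarith [hδ_abs]
      _ ≤ 2 * a^2 := by linarith [sq_nonneg a]

/-- complexification of the function `t ↦ g(y + t h)` -/
noncomputable def Phi (d : ℕ) (y h : EuclideanSpace ℝ (Fin d)) (t : ℂ) :
    EuclideanSpace ℂ (Fin d) :=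
  (Qc y h t ^ (-(d:ℂ)/2)) • (cplx d y + t • cplx d h)

lemma exp_cast_eq : (-(d:ℂ)/2) = ((-(d:ℝ)/2 : ℝ) : ℂ) := by push_cast; ring

section PhiFacts

variable {y h : EuclideanSpace ℝ (Fin d)} (hy : 0 < ‖y‖) (hh : 0 < ‖h‖)

lemma Qc_differentiable : Differentiable ℂ (Qc y h) := by
  unfold Qc
  fun_prop

include hy hh in
lemma Qc_slit {t : ℂ} (habs : ‖t‖ ≤ ‖y‖ / (3 * ‖h‖)) :
    Qc y h t ∈ Complex.slitPlane := by
  rw [Complex.mem_slitPlane_iff]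
  left
  have := (Qc_bounds y h hy hh t habs).1
  nlinarith [sq_nonneg ‖y‖, hy]

include hy hh in
lemma Phi_differentiableOn :
    DifferentiableOn ℂ (Phi d y h) (Metric.closedBall (0:ℂ) (‖y‖ / (3 * ‖h‖))) := by
  intro t ht
  rw [Metric.mem_closedBall, dist_zero_right] at ht
  apply DifferentiableAt.differentiableWithinAt
  have hq : DifferentiableAt ℂ (fun t => Qc y h t ^ (-(d:ℂ)/2)) t :=
    (Qc_differentiable t).cpow (differentiableAt_const _) (Qc_slit hy hh ht)
  have hw : DifferentiableAt ℂ (fun t : ℂ => cplx d y + t • cplx d h) t := by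
    apply DifferentiableAt.const_add
    exact differentiableAt_id.smul_const (cplx d h)
  exact hq.smul hw

include hy hh in
lemma Phi_norm_le {t : ℂ} (habs : ‖t‖ ≤ ‖y‖ / (3 * ‖h‖)) :
    ‖Phi d y h t‖ ≤ ((2/9) * ‖y‖^2) ^ (-(d:ℝ)/2) * ((4/3) * ‖y‖) := by
  set a := ‖y‖
  obtain ⟨hre, habs2⟩ := Qc_bounds y h hy hh t habs
  have hqpos : (2/9) * a^2 ≤ ‖Qc y h t‖ :=
    le_trans hre (Complex.re_le_norm _)
  have h29 : (0:ℝ) < (2/9) * a^2 := by positivity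
  rw [Phi, norm_smul]
  have h1 : ‖Qc y h t ^ (-(d:ℂ)/2)‖ ≤ ((2/9) * a^2) ^ (-(d:ℝ)/2) := by
    rw [exp_cast_eq (d := d), Complex.norm_cpow_real]
    refine Real.rpow_le_rpow_of_nonpos h29 hqpos ?_
    have : (0:ℝ) ≤ (d:ℝ) := Nat.cast_nonneg d
    linarith
  have h2 : ‖cplx d y + t • cplx d h‖ ≤ (4/3) * a := by
    calc ‖cplx d y + t • cplx d h‖ ≤ ‖cplx d y‖ + ‖t • cplx d h‖ := norm_add_le _ _
      _ = a + ‖t‖ * ‖h‖ := by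
          rw [norm_smul, (cplx d).norm_map, (cplx d).norm_map]
      _ ≤ a + a/3 := by
          have : ‖t‖ * ‖h‖ ≤ a/3 := by
            calc ‖t‖ * ‖h‖ ≤ (a / (3 * ‖h‖)) * ‖h‖ :=
                  mul_le_mul_of_nonneg_right habs (norm_nonneg h)
              _ = a / 3 := by field_simp
          linarith
      _ = (4/3) * a := by ring
  exact mul_le_mul h1 h2 (norm_nonneg _) (by positivity)

include hy hh in
lemma norm_line_ge {s : ℝ} (habs : |s| ≤ ‖y‖ / (3 * ‖h‖)) :
    (2/3) * ‖y‖ ≤ ‖y + s • h‖ := by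
  have h1 : ‖y‖ ≤ ‖y + s • h‖ + ‖s • h‖ := by
    calc ‖y‖ = ‖(y + s • h) - s • h‖ := by rw [add_sub_cancel_right]
      _ ≤ ‖y + s • h‖ + ‖s • h‖ := norm_sub_le _ _
  have h2 : ‖s • h‖ ≤ ‖y‖/3 := by
    rw [norm_smul, Real.norm_eq_abs]
    calc |s| * ‖h‖ ≤ (‖y‖ / (3 * ‖h‖)) * ‖h‖ := mul_le_mul_of_nonneg_right habs (norm_nonneg h)
      _ = ‖y‖ / 3 := by field_simp
  linarith

include hy hh in
lemma line_ne_zero {s : ℝ} (habs : |s| ≤ ‖y‖ / (3 * ‖h‖)) : y + s • h ≠ 0 := by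
  intro h0
  have := norm_line_ge hy hh habs
  rw [h0, norm_zero] at this
  nlinarith

include hy hh in
lemma Phi_real {s : ℝ} (habs : |s| ≤ ‖y‖ / (3 * ‖h‖)) :
    Phi d y h (s : ℂ) = cplx d (gravKernel d (y + s • h)) := by
  set x := y + s • h with hx
  have hxn : 0 < ‖x‖ := lt_of_lt_of_le (by nlinarith) (norm_line_ge hy hh habs)
  have hq : Qc y h (s:ℂ) = ((‖x‖^2 : ℝ) : ℂ) := Qc_real y h s
  have hcpow : Qc y h (s:ℂ) ^ (-(d:ℂ)/2) = (((‖x‖^d)⁻¹ : ℝ) : ℂ) := by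
    rw [hq, exp_cast_eq (d := d), ← Complex.ofReal_cpow (by positivity) (-(d:ℝ)/2)]
    congr 1
    rw [← Real.rpow_natCast ‖x‖ 2, ← Real.rpow_mul (norm_nonneg x)]
    have he : ((2:ℕ):ℝ) * (-(d:ℝ)/2) = -(d:ℝ) := by push_cast; ring
    rw [he, Real.rpow_neg (norm_nonneg x), Real.rpow_natCast]
  have hW : cplx d y + (s:ℂ) • cplx d h = cplx d x := by
    ext j
    simp [PiLp.add_apply, PiLp.smul_apply, hx]
  rw [Phi, hcpow, hW, cplx_smul]
  rfl


include hy hh in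
lemma iteratedDeriv_transfer (m : ℕ) :
    ∀ s : ℝ, |s| < ‖y‖ / (3 * ‖h‖) →
      iteratedDeriv m (Phi d y h) ((s : ℝ) : ℂ)
        = cplx d (iteratedDeriv m (fun u : ℝ => gravKernel d (y + u • h)) s) := by
  have hanal : AnalyticOnNhd ℂ (Phi d y h) (Metric.ball (0:ℂ) (‖y‖/(3*‖h‖))) :=
    ((Phi_differentiableOn hy hh).mono Metric.ball_subset_closedBall).analyticOnNhd
      Metric.isOpen_ball
  have hiter : ∀ n, AnalyticOnNhd ℂ (iteratedDeriv n (Phi d y h))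
      (Metric.ball (0:ℂ) (‖y‖/(3*‖h‖))) := by
    intro n
    induction n with
    | zero => simpa [iteratedDeriv_zero] using hanal
    | succ n ih => rw [iteratedDeriv_succ]; exact ih.deriv
  have hopen : IsOpen {u : ℝ | |u| < ‖y‖/(3*‖h‖)} := by
    have : {u : ℝ | |u| < ‖y‖/(3*‖h‖)} = Metric.ball (0:ℝ) (‖y‖/(3*‖h‖)) := by
      ext u; simp [Real.dist_eq]
    rw [this]; exact Metric.isOpen_ball
  induction m with
  | zero =>
      intro s hs
      simp only [iteratedDeriv_zero]
      exact Phi_real hy hh hs.le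
  | succ m ih =>
      intro s hs
      have hsC : ((s:ℝ):ℂ) ∈ Metric.ball (0:ℂ) (‖y‖/(3*‖h‖)) := by
        rw [Metric.mem_ball, dist_zero_right, Complex.norm_real, Real.norm_eq_abs]; exact hs
      have hD : HasDerivAt (iteratedDeriv m (Phi d y h))
          (deriv (iteratedDeriv m (Phi d y h)) ((s:ℝ):ℂ)) ((s:ℝ):ℂ) :=
        ((hiter m _ hsC).differentiableAt).hasDerivAt
      have h1 : HasDerivAt (fun u : ℝ => ((u:ℝ):ℂ)) 1 s := by
        simpa using (hasDerivAt_id s).ofReal_comp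
      have hres : HasDerivAt (fun u : ℝ => iteratedDeriv m (Phi d y h) ((u:ℝ):ℂ))
          (deriv (iteratedDeriv m (Phi d y h)) ((s:ℝ):ℂ)) s := by
        have := HasDerivAt.scomp s hD h1; simp only [one_smul] at this; exact this
      have hev : (fun u : ℝ => iteratedDeriv m (Phi d y h) ((u:ℝ):ℂ))
          =ᶠ[nhds s] fun u => cplx d
            (iteratedDeriv m (fun w : ℝ => gravKernel d (y + w • h)) u) :=
        Filter.eventuallyEq_of_mem (hopen.mem_nhds hs) fun u hu => ih u hu
      have hres2 : HasDerivAt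
          (fun u => cplx d (iteratedDeriv m (fun w : ℝ => gravKernel d (y + w • h)) u))
          (deriv (iteratedDeriv m (Phi d y h)) ((s:ℝ):ℂ)) s :=
        hres.congr_of_eventuallyEq hev.symm
      have hφev : iteratedDeriv m (fun w : ℝ => gravKernel d (y + w • h))
          =ᶠ[nhds s] fun u => ((Nat.factorial m : ℝ)) • Tm d h m (y + u • h) :=
        Filter.eventuallyEq_of_mem (hopen.mem_nhds hs) fun u hu =>
          iteratedDeriv_phi y h _ (fun w hw => line_ne_zero hy hh hw.le) m u hu
      have hTder : HasDerivAt (fun u : ℝ => ((Nat.factorial m : ℝ)) • Tm d h m (y + u • h))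
          (((Nat.factorial m : ℝ)) • (((m:ℝ)+1) • Tm d h (m+1) (y + s • h))) s :=
        (Tm_hasDerivAt y h m s (line_ne_zero hy hh hs.le)).fun_const_smul _
      have hφder : HasDerivAt (iteratedDeriv m (fun w : ℝ => gravKernel d (y + w • h)))
          (((Nat.factorial m : ℝ)) • (((m:ℝ)+1) • Tm d h (m+1) (y + s • h))) s :=
        hTder.congr_of_eventuallyEq hφev
      have hcomp : HasDerivAt
          (fun u => cplx d (iteratedDeriv m (fun w : ℝ => gravKernel d (y + w • h)) u))
          (cplx d (((Nat.factorial m : ℝ)) • (((m:ℝ)+1) • Tm d h (m+1) (y + s • h)))) s := by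
        have := (cplx d).toContinuousLinearMap.hasFDerivAt.comp_hasDerivAt s hφder
        exact this
      have hDe := hres2.unique hcomp
      rw [iteratedDeriv_succ, iteratedDeriv_succ, hDe, hφder.deriv]
end PhiFacts

lemma cplx_natfac_smul (n : ℕ) (hn : n ≠ 0) (v : EuclideanSpace ℝ (Fin d)) :
    ((n : ℂ))⁻¹ • cplx d ((n : ℝ) • v) = cplx d v := by
  have h1 : ((n : ℂ))⁻¹ = (((n:ℝ)⁻¹ : ℝ) : ℂ) := by push_cast; ring
  rw [h1, cplx_smul, smul_smul, inv_mul_cancel₀ (Nat.cast_ne_zero.mpr hn), one_smul]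

end GravAux


set_option maxHeartbeats 1000000 in
open GravAux in
/-- Let `d ≥ 3`. There exists a constant `C > 0` depending only on `d` such
that for every integer `k ≥ 1`, every `y ∈ ℝ^d∖{0}`, and every `z ∈ ℝ^d` with
`|z - y| ≤ |y|/C`, one has
`|g(z) - Σ_{|α| ≤ k} a_α·(z-y)^α| ≤ (C·k^d/|y|^{d-1})·(2d·|z-y|/|y|)^{k+1}`,
where the sum is over multi-indices `α` with `|α| ≤ k` (each such multi-index has all entries
`≤ k`, so they are enumerated by functions `Fin d → Fin (k+1)`). -/
theorem gravKernel_taylor_remainder_bound (d : ℕ) (hd : 3 ≤ d) :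
    ∃ C : ℝ, 0 < C ∧
      ∀ k : ℕ, 1 ≤ k →
      ∀ y : EuclideanSpace ℝ (Fin d), y ≠ 0 →
      ∀ z : EuclideanSpace ℝ (Fin d), ‖z - y‖ ≤ ‖y‖ / C →
        ‖gravKernel d z -
            ∑ α ∈ Finset.univ.filter (fun α : Fin d → Fin (k + 1) => ∑ i, (α i : ℕ) ≤ k),
              (∏ i, (z i - y i) ^ (α i : ℕ)) • taylorCoeff d (fun i => (α i : ℕ)) y‖ ≤
          C * k ^ d / ‖y‖ ^ (d - 1) * (2 * d * ‖z - y‖ / ‖y‖) ^ (k + 1) := by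
  classical
  set C : ℝ := 3 * (9/2:ℝ)^d + 6 * d with hCdef
  have hdR : (3:ℝ) ≤ (d:ℝ) := by exact_mod_cast hd
  have hCpos : 0 < C := by positivity
  have hC18 : 18 ≤ C := by
    have h1 : (1:ℝ) ≤ (9/2:ℝ)^d := one_le_pow₀ (by norm_num)
    have : (18:ℝ) ≤ 6 * (d:ℝ) := by linarith
    simp only [hCdef]
    nlinarith
  refine ⟨C, hCpos, ?_⟩
  intro k hk y hy z hz
  rw [GravAux.statement_sum_eq k y z]
  set h : EuclideanSpace ℝ (Fin d) := z - y with hhdef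
  set a : ℝ := ‖y‖ with hadef
  have hapos : 0 < a := norm_pos_iff.mpr hy
  by_cases hzero : h = 0
  · -- degenerate case z = y
    have hzy : z = y := by
      have := sub_eq_zero.mp hzero
      exact this
    have hTs : ∀ m, GravAux.Tm d h (m+1) y = 0 := by
      intro m
      apply Finset.sum_eq_zero
      intro α hα
      obtain ⟨-, hs⟩ := GravAux.mem_mIdx.mp hα
      have hex : ∃ i, α i ≠ 0 := by
        by_contra hno
        push_neg at hno
        rw [Finset.sum_eq_zero (fun i _ => hno i)] at hs
        omega
      obtain ⟨i, hi⟩ := hex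
      have hc : GravAux.Tcoef h α = 0 := by
        unfold GravAux.Tcoef
        have hp : (∏ j, h j ^ α j) = 0 := by
          apply Finset.prod_eq_zero (Finset.mem_univ i)
          rw [hzero]
          show (0:EuclideanSpace ℝ (Fin d)) i ^ α i = 0
          rw [show (0:EuclideanSpace ℝ (Fin d)) i = 0 from rfl]
          exact zero_pow hi
        rw [hp, zero_mul]
      rw [hc, zero_smul]
    have hLHS0 : gravKernel d z - ∑ m ∈ Finset.range (k+1), GravAux.Tm d h m y = 0 := by
      rw [Finset.sum_range_succ', Finset.sum_eq_zero (fun i _ => hTs i), zero_add,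
        GravAux.Tm_zero, hzy, sub_self]
    rw [hLHS0, norm_zero]
    positivity
  · -- main case
    have hhpos : 0 < ‖h‖ := norm_pos_iff.mpr hzero
    set R : ℝ := a / (3 * ‖h‖) with hRdef
    have hRpos : 0 < R := by positivity
    have hhC : ‖h‖ ≤ a / C := hz
    have hR6 : 6 ≤ R := by
      have hdivC : a / C ≤ a / 18 := by
        apply div_le_div_of_nonneg_left hapos.le (by norm_num) hC18
      have h18 : 18 * ‖h‖ ≤ a := by
        have h2 : ‖h‖ ≤ a / 18 := le_trans hhC hdivC
        linarith [(div_le_iff₀ (by norm_num : (0:ℝ) < 18)).mp (le_refl (a/18))]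
      rw [hRdef, le_div_iff₀ (by positivity)]
      linarith
    set Rnn : NNReal := Real.toNNReal R with hRnndef
    have hRnn : (Rnn : ℝ) = R := Real.coe_toNNReal R hRpos.le
    have hdiff : DifferentiableOn ℂ (Phi d y h) (Metric.closedBall (0:ℂ) ((Rnn : ℝ))) := by
      rw [hRnn]
      exact Phi_differentiableOn hapos hhpos
    have hFPS : HasFPowerSeriesOnBall (Phi d y h)
        (cauchyPowerSeries (Phi d y h) 0 Rnn) 0 Rnn :=
      hdiff.hasFPowerSeriesOnBall (Real.toNNReal_pos.mpr hRpos)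
    set p := cauchyPowerSeries (Phi d y h) 0 (Rnn : ℝ) with hpdef
    have hmem1 : (1:ℂ) ∈ Metric.eball (0:ℂ) Rnn := by
      have h6 : (1:NNReal) < Rnn := by
        rw [← NNReal.coe_lt_coe, NNReal.coe_one, hRnn]
        linarith
      rw [mem_eball_zero_iff, enorm_one]
      exact_mod_cast h6
    have hsum := hFPS.hasSum hmem1
    rw [zero_add] at hsum
    set Mv : ℝ := ((2/9) * a^2) ^ (-(d:ℝ)/2) * ((4/3) * a) with hMvdef
    have hMvpos : 0 < Mv := by
      rw [hMvdef]
      have : (0:ℝ) < ((2/9) * a^2) ^ (-(d:ℝ)/2) := Real.rpow_pos_of_pos (by positivity) _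
      positivity
    -- coefficient bounds
    have hcoef : ∀ n, ‖p n fun _ => (1:ℂ)‖ ≤ Mv * (1/R)^n := by
      intro n
      have hb1 : ‖p n fun _ => (1:ℂ)‖ ≤ ‖p n‖ := by
        have h2 := (p n).le_opNorm (fun _ => (1:ℂ))
        simpa using h2
      have hbound : ∀ θ : ℝ, ‖Phi d y h (circleMap 0 (Rnn:ℝ) θ)‖ ≤ Mv := by
        intro θ
        apply Phi_norm_le hapos hhpos
        rw [norm_circleMap_zero, hRnn, abs_of_pos hRpos]
      have hcont : ContinuousOn (fun θ : ℝ => ‖Phi d y h (circleMap 0 (Rnn:ℝ) θ)‖)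
          (Set.uIcc 0 (2*Real.pi)) := by
        apply ContinuousOn.norm
        apply hdiff.continuousOn.comp (continuous_circleMap 0 (Rnn:ℝ)).continuousOn
        intro θ _
        exact circleMap_mem_closedBall 0 (by rw [hRnn]; exact hRpos.le) θ
      have hI : (∫ θ in (0:ℝ)..(2*Real.pi), ‖Phi d y h (circleMap 0 (Rnn:ℝ) θ)‖)
          ≤ 2*Real.pi*Mv := by
        have h3 := intervalIntegral.integral_mono_on
          (by positivity : (0:ℝ) ≤ 2*Real.pi)
          (hcont.intervalIntegrable)
          (intervalIntegrable_const : IntervalIntegrable (fun _ => Mv) MeasureTheory.volume 0 (2*Real.pi))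
          (fun θ _ => hbound θ)
        rw [intervalIntegral.integral_const, smul_eq_mul] at h3
        calc (∫ θ in (0:ℝ)..(2*Real.pi), ‖Phi d y h (circleMap 0 (Rnn:ℝ) θ)‖)
            ≤ (2*Real.pi - 0) * Mv := h3
          _ = 2*Real.pi*Mv := by ring
      have hb2 := norm_cauchyPowerSeries_le (Phi d y h) 0 (Rnn:ℝ) n
      have hpi : (0:ℝ) < 2*Real.pi := by positivity
      calc ‖p n fun _ => (1:ℂ)‖ ≤ ‖p n‖ := hb1
        _ ≤ ((2 * Real.pi)⁻¹ * ∫ θ in (0:ℝ)..(2*Real.pi),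
              ‖Phi d y h (circleMap 0 (Rnn:ℝ) θ)‖) * |(Rnn:ℝ)|⁻¹ ^ n := hb2
        _ ≤ ((2 * Real.pi)⁻¹ * (2*Real.pi*Mv)) * |(Rnn:ℝ)|⁻¹ ^ n := by
            apply mul_le_mul_of_nonneg_right _ (by positivity)
            exact mul_le_mul_of_nonneg_left hI (by positivity)
        _ = Mv * (1/R)^n := by
            rw [hRnn, abs_of_pos hRpos]
            field_simp
    -- partial sums are the real Taylor data
    have hpartial : ∀ m, (p m fun _ => (1:ℂ)) = cplx d (GravAux.Tm d h m y) := by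
      intro m
      have hfac := hFPS.factorial_smul (1:ℂ) m
      have hID : iteratedDeriv m (Phi d y h) (0:ℂ)
          = iteratedFDeriv ℂ m (Phi d y h) 0 (fun _ => 1) := iteratedDeriv_eq_iteratedFDeriv
      have htr := iteratedDeriv_transfer hapos hhpos m 0 (by rw [abs_zero]; exact hRpos)
      rw [Complex.ofReal_zero] at htr
      have hφ0 := GravAux.iteratedDeriv_phi y h R
        (fun w hw => line_ne_zero hapos hhpos hw.le) m 0 (by rw [abs_zero]; exact hRpos)
      rw [zero_smul, add_zero] at hφ0
      have hkey : (Nat.factorial m) • (p m fun _ => (1:ℂ))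
          = cplx d ((Nat.factorial m : ℝ) • GravAux.Tm d h m y) := by
        rw [hfac, ← hID, htr, hφ0]
      have hnefac : ((Nat.factorial m : ℂ)) ≠ 0 :=
        Nat.cast_ne_zero.mpr (Nat.factorial_ne_zero m)
      calc p m (fun _ => (1:ℂ))
          = ((Nat.factorial m : ℂ))⁻¹ • ((Nat.factorial m : ℂ) • p m (fun _ => 1)) := by
            rw [smul_smul, inv_mul_cancel₀ hnefac, one_smul]
        _ = ((Nat.factorial m : ℂ))⁻¹ • cplx d ((Nat.factorial m : ℝ) • GravAux.Tm d h m y) := by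
            rw [Nat.cast_smul_eq_nsmul, hkey]
        _ = cplx d (GravAux.Tm d h m y) := cplx_natfac_smul _ (Nat.factorial_ne_zero m) _
    -- tail estimate
    have hq1 : (0:ℝ) ≤ 1/R := by positivity
    have hqlt : 1/R < 1 := by
      rw [div_lt_one hRpos]; linarith
    have htail : ‖Phi d y h 1 - ∑ m ∈ Finset.range (k+1), (p m fun _ => (1:ℂ))‖
        ≤ 2 * Mv * (1/R)^(k+1) := by
      have hsummable := hsum.summable
      have hsplit := hsummable.sum_add_tsum_nat_add (k+1)
      rw [hsum.tsum_eq] at hsplit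
      have hdiff_eq : Phi d y h 1 - ∑ m ∈ Finset.range (k+1), (p m fun _ => (1:ℂ))
          = ∑' i, (p (i + (k+1)) fun _ => (1:ℂ)) :=
        (eq_sub_of_add_eq' hsplit).symm
      rw [hdiff_eq]
      have hgeom : Summable (fun i : ℕ => Mv * (1/R)^(i + (k+1))) := by
        have hfe : (fun i : ℕ => Mv * (1/R)^(i+(k+1))) = fun i => (Mv * (1/R)^(k+1)) * (1/R)^i := by
          funext i; rw [pow_add]; ring
        rw [hfe]
        exact (summable_geometric_of_lt_one hq1 hqlt).mul_left _
      have hnb : ∀ i : ℕ, ‖p (i + (k+1)) fun _ => (1:ℂ)‖ ≤ Mv * (1/R)^(i + (k+1)) :=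
        fun i => hcoef (i + (k+1))
      have hsn : Summable (fun i : ℕ => ‖p (i + (k+1)) fun _ => (1:ℂ)‖) :=
        Summable.of_nonneg_of_le (fun i => norm_nonneg _) hnb hgeom
      calc ‖∑' i, (p (i + (k+1)) fun _ => (1:ℂ))‖
          ≤ ∑' i, ‖p (i + (k+1)) fun _ => (1:ℂ)‖ := norm_tsum_le_tsum_norm hsn
        _ ≤ ∑' i, (Mv * (1/R)^(i + (k+1))) := Summable.tsum_le_tsum hnb hsn hgeom
        _ = (Mv * (1/R)^(k+1)) * (1 - 1/R)⁻¹ := by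
            have he : ∀ i : ℕ, Mv * (1/R)^(i + (k+1)) = (Mv * (1/R)^(k+1)) * (1/R)^i := by
              intro i; rw [pow_add]; ring
            rw [tsum_congr he, tsum_mul_left, tsum_geometric_of_lt_one hq1 hqlt]
        _ ≤ 2 * Mv * (1/R)^(k+1) := by
            have hhalf : 1/R ≤ 1/2 := by
              apply div_le_div_of_nonneg_left (by norm_num) (by norm_num) (by linarith)
            have hinv : (1 - 1/R)⁻¹ ≤ 2 := by
              have h4 : (1:ℝ)/2 ≤ 1 - 1/R := by linarith
              calc (1 - 1/R)⁻¹ ≤ ((1:ℝ)/2)⁻¹ := by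
                    apply inv_anti₀ (by norm_num) h4
                _ = 2 := by norm_num
            calc (Mv * (1/R)^(k+1)) * (1 - 1/R)⁻¹ ≤ (Mv * (1/R)^(k+1)) * 2 := by
                  apply mul_le_mul_of_nonneg_left hinv (by positivity)
              _ = 2 * Mv * (1/R)^(k+1) := by ring
    -- value at 1
    have hPhi1 : Phi d y h 1 = cplx d (gravKernel d z) := by
      have h5 := Phi_real (d := d) hapos hhpos (s := 1) (by rw [abs_one]; linarith)
      rw [Complex.ofReal_one] at h5
      have harg : y + (1:ℝ) • h = z := by rw [one_smul, hhdef]; abel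
      rw [h5, harg]
    -- the constants
    have hand : a ^ d ≠ 0 := by positivity
    have hMv_bound : 2 * Mv * a^(d-1) ≤ C := by
      have hMv_id : Mv = (9/2:ℝ) ^ ((d:ℝ)/2) * (a^d)⁻¹ * ((4/3)*a) := by
        rw [hMvdef]
        congr 1
        rw [show (-(d:ℝ)/2) = -((d:ℝ)/2) by ring, Real.rpow_neg (by positivity),
          Real.mul_rpow (by norm_num) (by positivity)]
        have e1 : (a^2 : ℝ) ^ ((d:ℝ)/2) = a^d := by
          rw [← Real.rpow_natCast a 2, ← Real.rpow_mul hapos.le]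
          have : ((2:ℕ):ℝ) * ((d:ℝ)/2) = (d:ℝ) := by push_cast; ring
          rw [this, Real.rpow_natCast]
        rw [e1, mul_inv]
        congr 1
        rw [← Real.inv_rpow (by norm_num : (0:ℝ) ≤ (2/9:ℝ))]
        norm_num
      have hpow : a^(d-1) * a = a^d := by
        rw [← pow_succ]
        congr 1
        omega
      have hchain : 2 * Mv * a^(d-1) = (8/3) * (9/2:ℝ)^((d:ℝ)/2) := by
        rw [hMv_id]
        field_simp
        nlinarith [hpow, Real.rpow_pos_of_pos (by norm_num : (0:ℝ) < 9/2) ((d:ℝ)/2)]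
      rw [hchain]
      have hle1 : (9/2:ℝ)^((d:ℝ)/2) ≤ (9/2:ℝ)^(d:ℝ) :=
        Real.rpow_le_rpow_of_exponent_le (by norm_num) (by linarith [Nat.cast_nonneg (α := ℝ) d])
      rw [Real.rpow_natCast] at hle1
      have : (0:ℝ) ≤ (9/2:ℝ)^((d:ℝ)/2) := (Real.rpow_pos_of_pos (by norm_num) _).le
      simp only [hCdef]
      nlinarith
    -- final chain
    have h1R : 1/R = 3*‖h‖/a := by
      rw [hRdef]
      field_simp
    calc ‖gravKernel d z - ∑ m ∈ Finset.range (k+1), GravAux.Tm d h m y‖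
        = ‖cplx d (gravKernel d z - ∑ m ∈ Finset.range (k+1), GravAux.Tm d h m y)‖ :=
          ((cplx d).norm_map _).symm
      _ = ‖Phi d y h 1 - ∑ m ∈ Finset.range (k+1), (p m fun _ => (1:ℂ))‖ := by
          rw [map_sub, map_sum, hPhi1]
          congr 2
          exact Finset.sum_congr rfl fun m _ => (hpartial m).symm
      _ ≤ 2 * Mv * (1/R)^(k+1) := htail
      _ = (2 * Mv) * (3*‖h‖/a)^(k+1) := by rw [h1R]
      _ ≤ (C/a^(d-1)) * (3*‖h‖/a)^(k+1) := by
          apply mul_le_mul_of_nonneg_right _ (by positivity)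
          rw [le_div_iff₀ (by positivity)]
          exact hMv_bound
      _ ≤ (C/a^(d-1)) * (2*(d:ℝ)*‖h‖/a)^(k+1) := by
          apply mul_le_mul_of_nonneg_left _ (by positivity)
          apply pow_le_pow_left₀ (by positivity)
          gcongr
          linarith
      _ ≤ C * (k:ℝ)^d / a^(d-1) * (2*(d:ℝ)*‖h‖/a)^(k+1) := by
          apply mul_le_mul_of_nonneg_right _ (by positivity)
          have hk1 : (1:ℝ) ≤ (k:ℝ)^d := one_le_pow₀ (by exact_mod_cast hk)
          calc C/a^(d-1) = C * 1 / a^(d-1) := by ring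
            _ ≤ C * (k:ℝ)^d / a^(d-1) := by gcongr
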